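/- arXiv:1608.05707 — 4 statements merged into one kernel-verified Lean document; each statement's English description precedes it below -/
import Mathlib

section
/- Let H be a complex Hilbert space, A ∈ L(H) coercive, and for x ∈ H let u be the unique solution in W^{2,2}((0,∞);H) of u'' = Au with u(0) = x. Define Dx := -u'(0). Then D is accretive: Re⟨Dx,x⟩ ≥ 0 for all x ∈ H. -/
open MeasureTheory Set Filter

noncomputable section

/-- `IsW22Sol A x u u' u''` says: `u ∈ W^{2,2}((0,∞);H)` (via its `C¹([0,∞);H)`
representative, with first derivative `u'` and second derivative `u''`, all
square-integrable on `(0,∞)`), `u(0) = x` and `u''(t) = A u(t)` on `(0,∞)`. -/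
def IsW22Sol {H : Type*} [NormedAddCommGroup H] [InnerProductSpace ℂ H]
    (A : H →L[ℂ] H) (x : H) (u u' u'' : ℝ → H) : Prop :=
  ContinuousOn u (Ici 0) ∧ ContinuousOn u' (Ici 0) ∧
  (∀ t ∈ Ioi (0:ℝ), HasDerivAt u (u' t) t) ∧
  (∀ t ∈ Ioi (0:ℝ), HasDerivAt u' (u'' t) t) ∧
  MemLp u 2 (volume.restrict (Ioi 0)) ∧
  MemLp u' 2 (volume.restrict (Ioi 0)) ∧
  MemLp u'' 2 (volume.restrict (Ioi 0)) ∧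
  u 0 = x ∧ (∀ t ∈ Ioi (0:ℝ), u'' t = A (u t))

lemma hasDerivAt_creal {f : ℝ → ℂ} {f' : ℂ} {t : ℝ}
    (hf : HasDerivAt f f' t) : HasDerivAt (fun s => (f s).re) f'.re t := by
  exact (Complex.reCLM.hasFDerivAt.comp_hasDerivAt t hf)

lemma inner_self_re {H : Type*} [NormedAddCommGroup H] [InnerProductSpace ℂ H]
    (y : H) : (inner ℂ y y : ℂ).re = ‖y‖ ^ 2 := by
  rw [← RCLike.re_to_complex, inner_self_eq_norm_sq]

lemma inner_re_symm' {H : Type*} [NormedAddCommGroup H] [InnerProductSpace ℂ H]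
    (y z : H) : (inner ℂ y z : ℂ).re = (inner ℂ z y : ℂ).re := by
  rw [← inner_conj_symm y z, Complex.conj_re]

/-- the Dirichlet-to-Neumann operator `D x = -u'(0)` (where `u`
solves `u'' = A u`, `u(0) = x` in `W^{2,2}((0,∞);H)`) is accretive:
`Re ⟨D x, x⟩ ≥ 0`. -/
theorem dirichlet_to_neumann_accretive
    {H : Type*} [NormedAddCommGroup H] [InnerProductSpace ℂ H] [CompleteSpace H]
    (A : H →L[ℂ] H) (α : ℝ) (hα0 : 0 < α) (hα1 : α ≤ 1)
    (hA : ∀ y : H, α * ‖y‖ ^ 2 ≤ (inner ℂ (A y) y : ℂ).re)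
    (x : H) (u u' u'' : ℝ → H) (hu : IsW22Sol A x u u' u'') :
    0 ≤ (inner ℂ (-(u' 0)) x : ℂ).re := by
  obtain ⟨hcu, hcu', hd1, hd2, hL2u, _, _, hux, heq⟩ := hu
  set φ : ℝ → ℝ := fun t => (inner ℂ (u' t) (u t) : ℂ).re with hφdef
  have hφderiv : ∀ t ∈ Ioi (0:ℝ), HasDerivAt φ
      ((inner ℂ (u' t) (u' t) : ℂ).re + (inner ℂ (u'' t) (u t) : ℂ).re) t := by
    intro t ht
    have h := (hd2 t ht).inner ℂ (hd1 t ht)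
    have := hasDerivAt_creal h
    simpa [hφdef, Complex.add_re] using this
  have hφnn : ∀ t ∈ Ioi (0:ℝ),
      0 ≤ (inner ℂ (u' t) (u' t) : ℂ).re + (inner ℂ (u'' t) (u t) : ℂ).re := by
    intro t ht
    have h1 : (inner ℂ (u' t) (u' t) : ℂ).re = ‖u' t‖ ^ 2 := inner_self_re _
    have h2 : α * ‖u t‖ ^ 2 ≤ (inner ℂ (u'' t) (u t) : ℂ).re := by
      rw [heq t ht]; exact hA (u t)
    have h3 : 0 ≤ α * ‖u t‖ ^ 2 := mul_nonneg hα0.le (sq_nonneg _)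
    have h4 : 0 ≤ ‖u' t‖ ^ 2 := sq_nonneg _
    linarith
  have hφcont : ContinuousOn φ (Ici 0) :=
    Complex.continuous_re.comp_continuousOn (hcu'.inner hcu)
  have hφmono : MonotoneOn φ (Ici 0) := by
    apply monotoneOn_of_deriv_nonneg (convex_Ici 0) hφcont
    · intro t ht
      rw [interior_Ici] at ht
      exact (hφderiv t ht).differentiableAt.differentiableWithinAt
    · intro t ht
      rw [interior_Ici] at ht
      rw [(hφderiv t ht).deriv]
      exact hφnn t ht
  have key : φ 0 ≤ 0 := by
    by_contra hc
    push_neg at hc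
    set c := φ 0 with hcdef
    set h : ℝ → ℝ := fun t => (inner ℂ (u t) (u t) : ℂ).re - 2 * c * t with hhdef
    have hhd : ∀ t ∈ Ioi (0:ℝ), HasDerivAt h
        ((inner ℂ (u t) (u' t) : ℂ).re + (inner ℂ (u' t) (u t) : ℂ).re - 2 * c) t := by
      intro t ht
      have h1 := hasDerivAt_creal ((hd1 t ht).inner ℂ (hd1 t ht))
      have h2 : HasDerivAt (fun s : ℝ => 2 * c * s) (2 * c) t := by
        simpa using (hasDerivAt_id t).const_mul (2 * c)
      have h3 := h1.sub h2
      simp only [Complex.add_re] at h3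
      exact h3
    have hhmono : MonotoneOn h (Ici 0) := by
      apply monotoneOn_of_deriv_nonneg (convex_Ici 0)
      · exact (Complex.continuous_re.comp_continuousOn (hcu.inner hcu)).sub
          (continuous_const.mul continuous_id).continuousOn
      · intro t ht
        rw [interior_Ici] at ht
        exact (hhd t ht).differentiableAt.differentiableWithinAt
      · intro t ht
        rw [interior_Ici] at ht
        rw [(hhd t ht).deriv]
        have hre : (inner ℂ (u t) (u' t) : ℂ).re = (inner ℂ (u' t) (u t) : ℂ).re :=
          inner_re_symm' _ _
        have hφt : c ≤ φ t := hφmono (self_mem_Ici) (mem_Ici.mpr (le_of_lt ht)) (le_of_lt ht)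
        simp only [hφdef] at hφt
        linarith
    have hg : ∀ t : ℝ, 1 ≤ t → 2 * c ≤ ‖u t‖ ^ 2 := by
      intro t ht
      have h0 : h 0 ≤ h t := hhmono self_mem_Ici (mem_Ici.mpr (by linarith)) (by linarith)
      have hn0 : (0:ℝ) ≤ (inner ℂ (u 0) (u 0) : ℂ).re := by
        rw [inner_self_re]; positivity
      have hnt : (inner ℂ (u t) (u t) : ℂ).re = ‖u t‖ ^ 2 := inner_self_re _
      simp only [hhdef, mul_zero, sub_zero] at h0
      nlinarith
    have hint : Integrable (fun t => ‖u t‖ ^ 2) (volume.restrict (Ioi 0)) := by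
      have := hL2u.integrable_norm_rpow (by norm_num) (by norm_num)
      have h2 : ((2:ENNReal)).toReal = ((2:ℕ):ℝ) := by norm_num
      simpa [h2, Real.rpow_natCast] using this
    have hint1 : Integrable (fun t => ‖u t‖ ^ 2) (volume.restrict (Ioi 1)) :=
      hint.mono_measure (Measure.restrict_mono (Ioi_subset_Ioi zero_le_one) le_rfl)
    have hconst : Integrable (fun _ : ℝ => 2 * c) (volume.restrict (Ioi 1)) := by
      apply hint1.mono aestronglyMeasurable_const
      filter_upwards [ae_restrict_mem measurableSet_Ioi] with t ht
      have h5 := hg t (le_of_lt ht)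
      rw [Real.norm_eq_abs, Real.norm_eq_abs, abs_of_nonneg (by positivity),
        abs_of_nonneg (by positivity)]
      exact h5
    rw [integrable_const_iff] at hconst
    rcases hconst with h1 | h2
    · linarith
    · replace h2 := h2.measure_univ_lt_top
      rw [Measure.restrict_apply_univ, Real.volume_Ioi] at h2
      exact (lt_irrefl _ h2).elim
  have hfin : (inner ℂ (-(u' 0)) x : ℂ).re = -φ 0 := by
    rw [← hux]
    simp [hφdef, inner_neg_left]
  rw [hfin]
  linarith
end
end

section
/- Let H be a complex Hilbert space, A ∈ L(H) coercive, and D the Dirichlet-to-Neumann operator defined by Dx = -u'(0) where u ∈ W^{2,2}((0,∞);H) is the unique solution of u'' = Au, u(0) = x. Then D² = A. -/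
open MeasureTheory Set Filter

noncomputable section

/-- if `D : H → H` is the Dirichlet-to-Neumann operator,
i.e. `D x = -u'(0)` where `u ∈ W^{2,2}((0,∞);H)` is the (unique) solution of
`u'' = A u`, `u(0) = x`, then `D² = A`. -/
theorem dirichlet_to_neumann_squared
    {H : Type*} [NormedAddCommGroup H] [InnerProductSpace ℂ H] [CompleteSpace H]
    (A : H →L[ℂ] H) (α : ℝ) (hα0 : 0 < α) (hα1 : α ≤ 1)
    (hA : ∀ y : H, α * ‖y‖ ^ 2 ≤ (inner ℂ (A y) y : ℂ).re)
    (D : H → H)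
    (hD : ∀ x : H, ∃ u u' u'' : ℝ → H, IsW22Sol A x u u' u'' ∧ D x = -(u' 0))
    (huniq : ∀ (x : H) (u₁ u₁' u₁'' u₂ u₂' u₂'' : ℝ → H),
      IsW22Sol A x u₁ u₁' u₁'' → IsW22Sol A x u₂ u₂' u₂'' →
      ∀ t ∈ Ici (0:ℝ), u₁ t = u₂ t) :
    ∀ x : H, D (D x) = A x := by
  intro x
  obtain ⟨u, u', u'', ⟨hu_c, hu'_c, hu_d, hu'_d, hu_L, hu'_L, hu''_L, hu0, heq⟩, hDx⟩ := hD x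
  -- `v := -u'` is a solution with initial value `D x`, with derivative `v' := -(A ∘ u)`.
  set v : ℝ → H := fun t => -(u' t) with hv
  set v' : ℝ → H := fun t => -(A (u t)) with hv'
  set v'' : ℝ → H := fun t => -(A (u' t)) with hv''
  have hv_sol : IsW22Sol A (D x) v v' v'' := by
    refine ⟨hu'_c.neg, ((A.continuous.comp_continuousOn hu_c)).neg, ?_, ?_, hu'_L.neg,
      (A.comp_memLp' hu_L).neg, (A.comp_memLp' hu'_L).neg, ?_, ?_⟩
    · intro t ht
      have : HasDerivAt u' (A (u t)) t := by
        have h1 : HasDerivAt u' (u'' t) t := hu'_d t ht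
        rwa [heq t ht] at h1
      exact this.neg
    · intro t ht
      have h2 := ((A.restrictScalars ℝ).hasFDerivAt (x := u t)).comp_hasDerivAt t (hu_d t ht)
      exact h2.neg
    · simp [hv, hDx]
    · intro t ht; simp [hv', hv'', hv, map_neg]
  -- Apply the definition of `D` at `D x` and compare with `v` by uniqueness.
  obtain ⟨w, w', w'', hw_sol, hDDx⟩ := hD (D x)
  obtain ⟨hw_c, hw'_c, hw_d, hw'_d, hw_L, hw'_L, hw''_L, hw0, hweq⟩ := hw_sol
  have huv : ∀ t ∈ Ici (0:ℝ), w t = v t :=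
    huniq (D x) w w' w'' v v' v'' ⟨hw_c, hw'_c, hw_d, hw'_d, hw_L, hw'_L, hw''_L, hw0, hweq⟩ hv_sol
  -- derivatives agree on `Ioi 0`
  have hderiv : ∀ t ∈ Ioi (0:ℝ), w' t = v' t := by
    intro t ht
    have hev : w =ᶠ[nhds t] v :=
      Filter.eventuallyEq_of_mem (isOpen_Ioi.mem_nhds ht)
        (fun s hs => huv s (Ioi_subset_Ici_self hs))
    have h1 : HasDerivAt v (w' t) t := (hw_d t ht).congr_of_eventuallyEq hev.symm
    exact h1.unique (hv_sol.2.2.1 t ht)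
  -- take limits at 0 from the right
  have hlim_w : Tendsto w' (nhdsWithin 0 (Ioi 0)) (nhds (w' 0)) :=
    ((hw'_c 0 self_mem_Ici).mono_left
      (nhdsWithin_mono 0 Ioi_subset_Ici_self))
  have hlim_v : Tendsto v' (nhdsWithin 0 (Ioi 0)) (nhds (v' 0)) :=
    ((hv_sol.2.1 0 self_mem_Ici).mono_left
      (nhdsWithin_mono 0 Ioi_subset_Ici_self))
  have hlim_w' : Tendsto v' (nhdsWithin 0 (Ioi 0)) (nhds (w' 0)) :=
    hlim_w.congr' (Filter.eventuallyEq_of_mem self_mem_nhdsWithin hderiv)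
  have h0 : w' 0 = v' 0 := tendsto_nhds_unique hlim_w' hlim_v
  have : D (D x) = -(v' 0) := by rw [hDDx, h0]
  simp [this, hv', hu0]
end
end

section
/- Let H be a Hilbert space and A an m-sectorial operator generating a C₀-semigroup satisfying ‖e^{-tA}‖ ≤ e^{-μt} for some μ > 0. For s ∈ (0,1) define U(t) = (1/Γ(s)) ∫₀^∞ e^{-t²/(4r)} r^{s-1} e^{-rA} dr. Then for every x ∈ D(A^s), the function u(t) = U(t)A^s x satisfies lim_{t↓0} (-t^{1-2s} u'(t)) = c_s A^s x in H, where c_s = 2^{1-2s}Γ(1-s)/Γ(s). -/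
open MeasureTheory Set Filter

noncomputable section

lemma aux_exp_bound {c r : ℝ} (hc : 0 < c) (hr : 0 < r) :
    Real.exp (-(c / r)) ≤ (2 * r / c) ^ 2 := by
  have h1 : c / (2 * r) ≤ Real.exp (c / (2 * r)) :=
    le_trans (by linarith) (Real.add_one_le_exp _)
  have h2 : (c / (2 * r)) ^ 2 ≤ Real.exp (c / r) := by
    have he : Real.exp (c / r) = Real.exp (c / (2 * r)) ^ 2 := by
      rw [← Real.exp_nat_mul]; congr 1; field_simp; ring
    rw [he]
    exact pow_le_pow_left₀ (by positivity) h1 2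
  have h3 : (Real.exp (c / r))⁻¹ ≤ ((c / (2 * r)) ^ 2)⁻¹ :=
    inv_anti₀ (by positivity) h2
  rw [Real.exp_neg]
  refine h3.trans (le_of_eq ?_)
  rw [← inv_pow, inv_div]

lemma aux_int1 {b m : ℝ} (hb : -1 < b) (hb' : b ≤ 0) (hm : 0 < m) :
    IntegrableOn (fun r : ℝ => r ^ b * Real.exp (-(m * r))) (Ioi 0) := by
  have hsplit : Ioi (0:ℝ) = Ioc 0 1 ∪ Ioi 1 := by
    rw [Ioc_union_Ioi_eq_Ioi zero_le_one]
  rw [hsplit]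
  apply IntegrableOn.union
  · have hint : IntegrableOn (fun r : ℝ => r ^ b) (Ioc 0 1) := by
      rw [← intervalIntegrable_iff_integrableOn_Ioc_of_le zero_le_one]
      exact intervalIntegral.intervalIntegrable_rpow' hb
    refine Integrable.mono' hint ?_ ?_
    · apply ContinuousOn.aestronglyMeasurable ?_ measurableSet_Ioc
      apply ContinuousOn.mul
      · exact fun r hrm => ((Real.continuousAt_rpow_const r b (Or.inl (ne_of_gt hrm.1))).continuousWithinAt)
      · exact (Real.continuous_exp.comp (continuous_const.mul continuous_id).neg).continuousOn
    · filter_upwards [ae_restrict_mem measurableSet_Ioc] with r hrm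
      have h0 : (0:ℝ) < r := hrm.1
      rw [Real.norm_eq_abs, abs_mul, abs_of_nonneg (Real.rpow_nonneg h0.le _),
        abs_of_nonneg (Real.exp_pos _).le]
      nlinarith [Real.exp_le_one_iff.2 (by nlinarith : -(m*r) ≤ 0), Real.rpow_nonneg h0.le b,
        Real.exp_pos (-(m*r))]
  · refine Integrable.mono' (exp_neg_integrableOn_Ioi 1 hm) ?_ ?_
    · apply ContinuousOn.aestronglyMeasurable ?_ measurableSet_Ioi
      apply ContinuousOn.mul
      · exact fun r hrm => ((Real.continuousAt_rpow_const r b (Or.inl (by simp only [mem_Ioi] at hrm; positivity))).continuousWithinAt)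
      · exact (Real.continuous_exp.comp (continuous_const.mul continuous_id).neg).continuousOn
    · filter_upwards [ae_restrict_mem measurableSet_Ioi] with r hrm
      have h1 : (1:ℝ) ≤ r := le_of_lt hrm
      have hle : r ^ b ≤ 1 := Real.rpow_le_one_of_one_le_of_nonpos h1 hb'
      rw [Real.norm_eq_abs, abs_mul, abs_of_nonneg (Real.rpow_nonneg (by linarith) _),
        abs_of_nonneg (Real.exp_pos _).le]
      have := Real.exp_pos (-(m*r))
      have hrw : -m * r = -(m * r) := by ring
      rw [hrw]
      nlinarith [Real.rpow_nonneg (show (0:ℝ) ≤ r by linarith) b]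

lemma aux_cont_exp_div (c : ℝ) : ContinuousOn (fun r : ℝ => Real.exp (-(c / r))) (Ioi 0) := by
  apply Real.continuous_exp.comp_continuousOn
  exact (continuousOn_const.div continuousOn_id fun r hr => ne_of_gt hr).neg

lemma aux_cont_rpow (b : ℝ) : ContinuousOn (fun r : ℝ => r ^ b) (Ioi 0) :=
  fun r hr => (Real.continuousAt_rpow_const r b (Or.inl (ne_of_gt hr))).continuousWithinAt

lemma aux_int2 {c b : ℝ} (hc : 0 < c) (hb : -3 < b) (hb' : b < -1) :
    IntegrableOn (fun r : ℝ => Real.exp (-(c / r)) * r ^ b) (Ioi 0) := by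
  have hmeas : ∀ S : Set ℝ, S ⊆ Ioi 0 → MeasurableSet S →
      AEStronglyMeasurable (fun r : ℝ => Real.exp (-(c / r)) * r ^ b) (volume.restrict S) :=
    fun S hS hSm => (((aux_cont_exp_div c).mono hS).mul ((aux_cont_rpow b).mono hS)).aestronglyMeasurable hSm
  have hsplit : Ioi (0:ℝ) = Ioc 0 1 ∪ Ioi 1 := by rw [Ioc_union_Ioi_eq_Ioi zero_le_one]
  rw [hsplit]
  apply IntegrableOn.union
  · have hint : IntegrableOn (fun r : ℝ => (4 / c ^ 2) * r ^ (b + 2)) (Ioc 0 1) := by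
      apply Integrable.const_mul
      rw [← IntegrableOn, ← intervalIntegrable_iff_integrableOn_Ioc_of_le zero_le_one]
      exact intervalIntegral.intervalIntegrable_rpow' (by linarith)
    refine Integrable.mono' hint (hmeas _ Ioc_subset_Ioi_self measurableSet_Ioc) ?_
    filter_upwards [ae_restrict_mem measurableSet_Ioc] with r hrm
    have h0 : (0:ℝ) < r := hrm.1
    have hexp : Real.exp (-(c / r)) ≤ (2 * r / c) ^ 2 := aux_exp_bound hc h0
    rw [Real.norm_eq_abs, abs_mul, abs_of_nonneg (Real.rpow_nonneg h0.le _),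
      abs_of_nonneg (Real.exp_pos _).le]
    have h1 : Real.exp (-(c / r)) * r ^ b ≤ (2 * r / c) ^ 2 * r ^ b :=
      mul_le_mul_of_nonneg_right hexp (Real.rpow_nonneg h0.le _)
    refine h1.trans (le_of_eq ?_)
    have : r ^ (b + 2) = r ^ b * r ^ (2:ℕ) := by
      rw [Real.rpow_add h0, show (2:ℝ) = ((2:ℕ):ℝ) by norm_num, Real.rpow_natCast]
    rw [this]; field_simp; ring
  · have hint : IntegrableOn (fun r : ℝ => r ^ b) (Ioi 1) :=
      integrableOn_Ioi_rpow_of_lt hb' one_pos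
    refine Integrable.mono' hint (hmeas _ (fun r hr => mem_Ioi.2 (lt_trans one_pos hr)) measurableSet_Ioi) ?_
    filter_upwards [ae_restrict_mem measurableSet_Ioi] with r hrm
    have h0 : (0:ℝ) < r := lt_trans one_pos hrm
    rw [Real.norm_eq_abs, abs_mul, abs_of_nonneg (Real.rpow_nonneg h0.le _),
      abs_of_nonneg (Real.exp_pos _).le]
    have : Real.exp (-(c / r)) ≤ 1 := Real.exp_le_one_iff.2 (neg_nonpos.2 (by positivity))
    nlinarith [Real.rpow_nonneg h0.le b]

lemma aux_S {s : ℝ} (hs : s ∈ Ioo (0:ℝ) 1) :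
    ∫ τ in Ioi (0:ℝ), Real.exp (-(1/4 / τ)) * τ ^ (s-2)
      = 4 ^ (1-s) * Real.Gamma (1-s) := by
  set g : ℝ → ℝ := fun y => Real.exp (-(y/4)) * y ^ (-s) with hg
  have step1 : ∫ τ in Ioi (0:ℝ), Real.exp (-(1/4 / τ)) * τ ^ (s-2)
      = ∫ x in Ioi (0:ℝ), (|(-1:ℝ)| * x ^ ((-1:ℝ)-1)) • g (x ^ (-1:ℝ)) := by
    apply setIntegral_congr_fun measurableSet_Ioi
    intro x hx
    have hx0 : (0:ℝ) < x := hx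
    have h1 : x ^ ((-1:ℝ)) = x⁻¹ := Real.rpow_neg_one x
    have h2 : (x ^ ((-1:ℝ))) ^ (-s) = x ^ s := by
      rw [← Real.rpow_mul hx0.le]; norm_num
    have h3 : x ^ ((-1:ℝ)-1) = x ^ (-2:ℝ) := by norm_num
    simp only [hg, h3, abs_neg, abs_one, one_mul, smul_eq_mul]
    rw [h2, h1]
    have h4 : x⁻¹ / 4 = 1/4 / x := by ring
    rw [h4]
    rw [show x ^ (-2:ℝ) * (Real.exp (-(1/4 / x)) * x ^ s)
        = Real.exp (-(1/4 / x)) * (x ^ (-2:ℝ) * x ^ s) by ring,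
      ← Real.rpow_add hx0]
    norm_num
    ring_nf
  have step2 : (∫ x in Ioi (0:ℝ), (|(-1:ℝ)| * x ^ ((-1:ℝ)-1)) • g (x ^ (-1:ℝ)))
      = ∫ y in Ioi (0:ℝ), g y :=
    integral_comp_rpow_Ioi g (by norm_num)
  have step3 : (∫ y in Ioi (0:ℝ), g y) = 4 * ∫ x in Ioi (0:ℝ), g (4*x) := by
    rw [integral_comp_mul_left_Ioi g 0 (by norm_num : (0:ℝ) < 4)]
    simp [mul_comm]
  have step4 : (∫ x in Ioi (0:ℝ), g (4*x)) = (4:ℝ) ^ (-s) * Real.Gamma (1-s) := by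
    rw [Real.Gamma_eq_integral (by linarith [hs.2] : 0 < 1 - s), ← integral_const_mul]
    apply setIntegral_congr_fun measurableSet_Ioi
    intro x hx
    have hx0 : (0:ℝ) < x := hx
    simp only [hg]
    rw [show (4*x)/4 = x by ring, Real.mul_rpow (by norm_num) hx0.le,
      show (1-s)-1 = -s by ring]
    ring
  rw [step1, step2, step3, step4, ← mul_assoc]
  congr 1
  rw [show (4:ℝ) * 4 ^ (-s) = 4 ^ (1:ℝ) * 4 ^ (-s) by rw [Real.rpow_one],
    ← Real.rpow_add (by norm_num : (0:ℝ) < 4)]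
  norm_num
  ring_nf

/-- let `(T r)_{r≥0} = (e^{-rA})_{r≥0}` be a strongly continuous
semigroup of operators on a Hilbert space `H` with `‖T r‖ ≤ e^{-μ r}`, and let
`s ∈ (0,1)`.  For `x ∈ D(A^s)` put `Asx = A^s x` and
`u(t) = U(t) Asx = Γ(s)⁻¹ ∫₀^∞ e^{-t²/(4r)} r^{s-1} T r Asx dr`.
Then `u` is differentiable on `(0,∞)` and
`lim_{t↓0} (-t^{1-2s} u'(t)) = c_s Asx` in `H`, with
`c_s = 2^{1-2s} Γ(1-s)/Γ(s)`. -/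
theorem normal_derivative_of_poisson_formula
    {H : Type*} [NormedAddCommGroup H] [InnerProductSpace ℂ H] [CompleteSpace H]
    (μ : ℝ) (hμ : 0 < μ)
    (T : ℝ → H →L[ℂ] H)
    (hT0 : T 0 = ContinuousLinearMap.id ℂ H)
    (hTsg : ∀ a b : ℝ, 0 ≤ a → 0 ≤ b → T (a + b) = (T a).comp (T b))
    (hTc : ∀ x : H, ContinuousOn (fun r => T r x) (Ici 0))
    (hTb : ∀ r : ℝ, 0 ≤ r → ‖T r‖ ≤ Real.exp (-(μ * r)))
    (s : ℝ) (hs : s ∈ Ioo (0:ℝ) 1) (Asx : H) :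
    ∃ u' : ℝ → H,
      (∀ t ∈ Ioi (0:ℝ), HasDerivAt
        (fun t : ℝ => (Real.Gamma s)⁻¹ •
          ∫ r in Ioi (0:ℝ), (Real.exp (-(t ^ 2) / (4 * r)) * r ^ (s - 1)) • T r Asx)
        (u' t) t) ∧
      Tendsto (fun t : ℝ => -(t ^ (1 - 2*s) • u' t)) (nhdsWithin 0 (Ioi 0))
        (nhds ((2 ^ (1 - 2*s) * Real.Gamma (1 - s) / Real.Gamma s) • Asx)) := by
  obtain ⟨hs0, hs1⟩ := hs
  -- norm bound on the orbit
  have hTnorm : ∀ r : ℝ, 0 ≤ r → ‖T r Asx‖ ≤ ‖Asx‖ := by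
    intro r hr
    calc ‖T r Asx‖ ≤ ‖T r‖ * ‖Asx‖ := (T r).le_opNorm Asx
      _ ≤ 1 * ‖Asx‖ := by
          apply mul_le_mul_of_nonneg_right _ (norm_nonneg _)
          exact (hTb r hr).trans (Real.exp_le_one_iff.2 (neg_nonpos.2 (by positivity)))
      _ = ‖Asx‖ := one_mul _
  have hTcont : ContinuousOn (fun r => T r Asx) (Ioi (0:ℝ)) :=
    (hTc Asx).mono Ioi_subset_Ici_self
  have hexp_cont : ∀ t : ℝ, ContinuousOn (fun r : ℝ => Real.exp (-(t ^ 2) / (4 * r))) (Ioi 0) := by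
    intro t
    apply Real.continuous_exp.comp_continuousOn
    exact continuousOn_const.div ((continuous_const.mul continuous_id).continuousOn)
      (fun r hr => ne_of_gt (by have := mem_Ioi.mp hr; positivity))
  refine ⟨fun t => (Real.Gamma s)⁻¹ •
      ∫ r in Ioi (0:ℝ), (-(t/2) * Real.exp (-(t ^ 2) / (4 * r)) * r ^ (s - 2)) • T r Asx,
    fun t₀ ht₀ => ?_, ?_⟩
  · -- Differentiability
    have ht₀0 : (0:ℝ) < t₀ := ht₀
    have key := hasDerivAt_integral_of_dominated_loc_of_deriv_le
      (μ := volume.restrict (Ioi (0:ℝ))) (x₀ := t₀)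
      (F := fun t r => (Real.exp (-(t ^ 2) / (4 * r)) * r ^ (s - 1)) • T r Asx)
      (F' := fun t r => (-(t/2) * Real.exp (-(t ^ 2) / (4 * r)) * r ^ (s - 2)) • T r Asx)
      (bound := fun r => (‖Asx‖ * t₀) * (Real.exp (-(t₀^2/16 / r)) * r ^ (s-2)))
      (s := Metric.ball t₀ (t₀/2)) (Metric.ball_mem_nhds t₀ (half_pos ht₀0))
      ?_ ?_ ?_ ?_ ?_ ?_
    · exact key.2.const_smul _
    · -- measurability of F t
      filter_upwards with t
      apply ContinuousOn.aestronglyMeasurable _ measurableSet_Ioi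
      exact ((hexp_cont t).mul (aux_cont_rpow (s-1))).smul hTcont
    · -- integrability of F t₀
      apply Integrable.mono' ((aux_int1 (b := s - 1) (by linarith) (by linarith) hμ).const_mul ‖Asx‖)
      · apply ContinuousOn.aestronglyMeasurable _ measurableSet_Ioi
        exact ((hexp_cont t₀).mul (aux_cont_rpow (s-1))).smul hTcont
      · filter_upwards [ae_restrict_mem measurableSet_Ioi] with r hr
        have hr0 : (0:ℝ) < r := hr
        rw [norm_smul, Real.norm_eq_abs, abs_mul,
          abs_of_nonneg (Real.exp_pos _).le, abs_of_nonneg (Real.rpow_nonneg hr0.le _)]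
        have h1 : Real.exp (-(t₀ ^ 2) / (4 * r)) ≤ 1 :=
          by rw [neg_div]; exact Real.exp_le_one_iff.2 (neg_nonpos.2 (by positivity))
        have h2 : ‖T r Asx‖ ≤ Real.exp (-(μ * r)) * ‖Asx‖ := by
          calc ‖T r Asx‖ ≤ ‖T r‖ * ‖Asx‖ := (T r).le_opNorm Asx
            _ ≤ Real.exp (-(μ * r)) * ‖Asx‖ :=
                mul_le_mul_of_nonneg_right (hTb r hr0.le) (norm_nonneg _)
        calc Real.exp (-(t₀ ^ 2) / (4 * r)) * r ^ (s - 1) * ‖T r Asx‖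
            ≤ 1 * r ^ (s - 1) * (Real.exp (-(μ * r)) * ‖Asx‖) := by
              apply mul_le_mul _ h2 (norm_nonneg _) (by positivity)
              exact mul_le_mul_of_nonneg_right h1 (Real.rpow_nonneg hr0.le _)
          _ = ‖Asx‖ * (r ^ (s - 1) * Real.exp (-(μ * r))) := by ring
    · -- measurability of F' t₀
      apply ContinuousOn.aestronglyMeasurable _ measurableSet_Ioi
      exact ((continuousOn_const.mul (hexp_cont t₀)).mul (aux_cont_rpow (s-2))).smul hTcont
    · -- uniform bound for F'
      filter_upwards [ae_restrict_mem measurableSet_Ioi] with r hr t htb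
      have hr0 : (0:ℝ) < r := hr
      rw [Metric.mem_ball, Real.dist_eq, abs_lt] at htb
      have ht1 : t₀/2 < t := by linarith [htb.1]
      have ht2 : t < 3*t₀/2 := by linarith [htb.2]
      have ht0 : 0 < t := lt_trans (half_pos ht₀0) ht1
      have hexple : Real.exp (-(t ^ 2) / (4 * r)) ≤ Real.exp (-(t₀^2/16 / r)) := by
        apply Real.exp_le_exp.2
        rw [neg_div, neg_le_neg_iff, div_le_div_iff₀ (by positivity) (by positivity)]
        nlinarith [mul_lt_mul_of_pos_right (show t₀^2 < 4*t^2 by nlinarith) hr0]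
      calc ‖(-(t/2) * Real.exp (-(t ^ 2) / (4 * r)) * r ^ (s - 2)) • T r Asx‖
          = t/2 * Real.exp (-(t ^ 2) / (4 * r)) * r ^ (s - 2) * ‖T r Asx‖ := by
            rw [norm_smul, Real.norm_eq_abs, abs_mul, abs_mul, abs_neg,
              abs_of_nonneg (by positivity : (0:ℝ) ≤ t/2),
              abs_of_nonneg (Real.exp_pos _).le,
              abs_of_nonneg (Real.rpow_nonneg hr0.le _)]
        _ ≤ t₀ * Real.exp (-(t₀^2/16 / r)) * r ^ (s - 2) * ‖Asx‖ := by
            have h3 : t/2 ≤ t₀ := by linarith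
            gcongr <;> first | exact h3 | exact hexple | exact hTnorm r hr0.le
        _ = (‖Asx‖ * t₀) * (Real.exp (-(t₀^2/16 / r)) * r ^ (s-2)) := by ring
    · -- integrability of the bound
      exact (aux_int2 (by positivity) (by linarith) (by linarith)).const_mul _
    · -- the derivative computation
      filter_upwards [ae_restrict_mem measurableSet_Ioi] with r hr t htb
      have hr0 : (0:ℝ) < r := hr
      have hd1 : HasDerivAt (fun t : ℝ => -(t^2)/(4*r)) (-(2*t)/(4*r)) t := by
        have := ((hasDerivAt_pow 2 t).neg.div_const (4*r))
        exact this.congr_deriv (by norm_num)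
      have hd2 := (hd1.exp.mul_const (r ^ (s-1))).smul_const (T r Asx)
      have hsc : Real.exp (-(t^2)/(4*r)) * (-(2*t)/(4*r)) * r ^ (s-1)
          = -(t/2) * Real.exp (-(t^2)/(4*r)) * r ^ (s-2) := by
        rw [show s - 1 = s - 2 + 1 by ring, Real.rpow_add_one hr0.ne']
        field_simp
        ring
      rw [hsc] at hd2
      exact hd2
  · -- The limit
    set J : ℝ → H := fun t => ∫ τ in Ioi (0:ℝ),
        (Real.exp (-(1/4 / τ)) * τ ^ (s-2)) • T (t^2*τ) Asx with hJdef
    have hEq : ∀ t ∈ Ioi (0:ℝ),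
        -(t ^ (1-2*s) • ((Real.Gamma s)⁻¹ •
          ∫ r in Ioi (0:ℝ), (-(t/2) * Real.exp (-(t ^ 2) / (4 * r)) * r ^ (s - 2)) • T r Asx))
        = ((2 * Real.Gamma s)⁻¹) • J t := by
      intro t ht
      have ht0 : (0:ℝ) < t := ht
      have ht2 : (0:ℝ) < t^2 := by positivity
      have e1 : (∫ r in Ioi (0:ℝ), (-(t/2) * Real.exp (-(t ^ 2) / (4 * r)) * r ^ (s - 2)) • T r Asx)
          = (-(t/2)) • ∫ r in Ioi (0:ℝ), (Real.exp (-(t ^ 2) / (4 * r)) * r ^ (s - 2)) • T r Asx := by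
        rw [← integral_smul]
        apply setIntegral_congr_fun measurableSet_Ioi
        intro r hr
        dsimp only
        rw [smul_smul, mul_assoc]
      have e2 : (∫ r in Ioi (0:ℝ), (Real.exp (-(t ^ 2) / (4 * r)) * r ^ (s - 2)) • T r Asx)
          = (t^2) • ∫ τ in Ioi (0:ℝ),
              (Real.exp (-(t ^ 2) / (4 * (t^2*τ))) * (t^2*τ) ^ (s - 2)) • T (t^2*τ) Asx := by
        have hcv := integral_comp_mul_left_Ioi
          (fun r => (Real.exp (-(t ^ 2) / (4 * r)) * r ^ (s - 2)) • T r Asx) 0 ht2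
        simp only [mul_zero] at hcv
        rw [hcv, smul_smul, mul_inv_cancel₀ (ne_of_gt ht2), one_smul]
      have e3 : (∫ τ in Ioi (0:ℝ),
            (Real.exp (-(t ^ 2) / (4 * (t^2*τ))) * (t^2*τ) ^ (s - 2)) • T (t^2*τ) Asx)
          = ((t^2:ℝ) ^ (s-2)) • J t := by
        rw [hJdef, ← integral_smul]
        apply setIntegral_congr_fun measurableSet_Ioi
        intro τ hτ
        have hτ0 : (0:ℝ) < τ := hτ
        dsimp only
        rw [smul_smul]
        congr 1
        rw [Real.mul_rpow ht2.le hτ0.le]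
        have harg : -(t^2) / (4*(t^2*τ)) = -(1/4/τ) := by
          field_simp
        rw [harg]
        ring
      rw [e1, e2, e3]
      simp only [smul_smul, ← neg_smul]
      congr 1
      have hpow : ((t^2:ℝ)) ^ (s-2) = t ^ (2*s-4) := by
        rw [← Real.rpow_natCast t 2, ← Real.rpow_mul ht0.le]
        congr 1
        push_cast
        ring
      have hcomb : t ^ (1-2*s) * t ^ (2*s-4) = t ^ (-3:ℝ) := by
        rw [← Real.rpow_add ht0]
        congr 1
        ring
      have h3 : t ^ (-3:ℝ) * t^(3:ℕ) = 1 := by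
        rw [← Real.rpow_natCast t 3, ← Real.rpow_add ht0]
        norm_num
      calc -(t ^ (1-2*s) * ((Real.Gamma s)⁻¹ * (-(t/2) * (t^2 * (t^2:ℝ) ^ (s-2)))))
          = (Real.Gamma s)⁻¹ * 2⁻¹ * ((t ^ (1-2*s) * t ^ (2*s-4)) * t^(3:ℕ)) := by
            rw [hpow]; ring
        _ = (Real.Gamma s)⁻¹ * 2⁻¹ * (t ^ (-3:ℝ) * t^(3:ℕ)) := by rw [hcomb]
        _ = (2 * Real.Gamma s)⁻¹ := by rw [h3, mul_inv]; ring
    have hJlim : Tendsto J (nhdsWithin 0 (Ioi 0))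
        (nhds ((4^(1-s) * Real.Gamma (1-s)) • Asx)) := by
      have key := MeasureTheory.tendsto_integral_filter_of_dominated_convergence
        (μ := volume.restrict (Ioi (0:ℝ))) (l := nhdsWithin (0:ℝ) (Ioi 0))
        (F := fun (t : ℝ) (τ : ℝ) => (Real.exp (-(1/4 / τ)) * τ ^ (s-2)) • T (t^2*τ) Asx)
        (f := fun τ => (Real.exp (-(1/4 / τ)) * τ ^ (s-2)) • Asx)
        (bound := fun τ => (Real.exp (-(1/4 / τ)) * τ ^ (s-2)) * ‖Asx‖)
        ?_ ?_ ?_ ?_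
      · have hfint : (∫ τ in Ioi (0:ℝ), (Real.exp (-(1/4 / τ)) * τ ^ (s-2)) • Asx)
            = (4^(1-s) * Real.Gamma (1-s)) • Asx := by
          rw [integral_smul_const, aux_S ⟨hs0, hs1⟩]
        rw [hfint] at key
        exact key
      · -- measurability
        filter_upwards with t
        apply ContinuousOn.aestronglyMeasurable _ measurableSet_Ioi
        apply ContinuousOn.smul (f := fun τ : ℝ => Real.exp (-(1/4 / τ)) * τ ^ (s-2))
        · exact (aux_cont_exp_div (1/4)).mul (aux_cont_rpow (s-2))
        · apply (hTc Asx).comp ((continuous_const.mul continuous_id).continuousOn)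
          intro τ hτ
          have : (0:ℝ) < τ := hτ
          exact mem_Ici.2 (mul_nonneg (sq_nonneg t) this.le)
      · -- bound
        filter_upwards with t
        filter_upwards [ae_restrict_mem measurableSet_Ioi] with τ hτ
        have hτ0 : (0:ℝ) < τ := hτ
        rw [norm_smul, Real.norm_eq_abs, abs_of_nonneg (by positivity)]
        exact mul_le_mul_of_nonneg_left (hTnorm _ (by positivity)) (by positivity)
      · -- integrability of bound
        exact (aux_int2 (show (0:ℝ) < 1/4 by norm_num) (by linarith) (by linarith)).mul_const _
      · -- pointwise limit
        filter_upwards [ae_restrict_mem measurableSet_Ioi] with τ hτ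
        have hτ0 : (0:ℝ) < τ := hτ
        have hmap : Tendsto (fun t : ℝ => t^2*τ) (nhdsWithin 0 (Ioi 0)) (nhdsWithin 0 (Ici 0)) := by
          rw [tendsto_nhdsWithin_iff]
          constructor
          · exact (((continuous_pow 2).mul continuous_const).tendsto' 0 0
              (by norm_num)).mono_left nhdsWithin_le_nhds
          · filter_upwards [self_mem_nhdsWithin] with x hx
            have : (0:ℝ) < x := hx
            exact mem_Ici.2 (by positivity)
        have hcT : Tendsto (fun t : ℝ => T (t^2*τ) Asx) (nhdsWithin 0 (Ioi 0))
            (nhds (T 0 Asx)) := Filter.Tendsto.comp (hTc Asx 0 self_mem_Ici) hmap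
        rw [hT0] at hcT
        simpa using hcT.const_smul (Real.exp (-(1/4 / τ)) * τ ^ (s-2))
    have hC : ((2 * Real.Gamma s)⁻¹) • ((4^(1-s) * Real.Gamma (1-s)) • Asx)
        = (2 ^ (1 - 2*s) * Real.Gamma (1 - s) / Real.Gamma s) • Asx := by
      rw [smul_smul]
      congr 1
      have h24 : (2:ℝ) ^ (((2:ℕ)):ℝ) = 4 := by
        rw [Real.rpow_natCast]; norm_num
      have h4 : (4:ℝ)^(1-s) = 2^(2-2*s) := by
        calc (4:ℝ)^(1-s) = ((2:ℝ) ^ (((2:ℕ)):ℝ))^(1-s) := by rw [h24]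
          _ = (2:ℝ) ^ ((((2:ℕ)):ℝ)*(1-s)) := (Real.rpow_mul (by norm_num) _ _).symm
          _ = 2^(2-2*s) := by congr 1; push_cast; ring
      have h5 : (2:ℝ)^(2-2*s) = 2 * 2^(1-2*s) := by
        rw [show (2:ℝ)-2*s = 1 + (1-2*s) by ring, Real.rpow_add (by norm_num), Real.rpow_one]
      rw [h4, h5, mul_inv, div_eq_mul_inv]
      ring
    have hfinal : Tendsto (fun t => ((2 * Real.Gamma s)⁻¹) • J t) (nhdsWithin 0 (Ioi 0))
        (nhds ((2 ^ (1 - 2*s) * Real.Gamma (1 - s) / Real.Gamma s) • Asx)) := by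
      rw [← hC]
      exact hJlim.const_smul _
    apply hfinal.congr'
    filter_upwards [self_mem_nhdsWithin] with t ht
    exact (hEq t ht).symm
end
end

section
/- Let H be a Hilbert space and (e^{-tA})_{t≥0} a semigroup with ‖e^{-tA}‖_{L(H)} ≤ e^{-μt} for all t ≥ 0 and some μ > 0. For s ∈ (0,1) let U(t) = (1/Γ(s))∫₀^∞ e^{-t²/(4r)} r^{s-1} e^{-rA} dr. Then there exist δ ∈ (0,μ) and M ≥ 0 such that ‖U(t)‖_{L(H)} ≤ M e^{-δt} for all t > 0; explicitly ‖U(t)‖ ≤ μ^{-s} e^{-t/4} + (2/μ)^s e^{-μt/2}. -/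
open MeasureTheory Set Filter

noncomputable section

lemma aux_integrable_rpow_exp {b s : ℝ} (hb : 0 < b) (hs : 0 < s) :
    IntegrableOn (fun r : ℝ => r ^ (s - 1) * Real.exp (-(b * r))) (Ioi 0) := by
  have h0 : IntegrableOn (fun x : ℝ => Real.exp (-x) * x ^ (s - 1)) (Ioi 0) :=
    Real.GammaIntegral_convergent hs
  have h1 : IntegrableOn (fun x : ℝ => Real.exp (-(b * x)) * (b * x) ^ (s - 1)) (Ioi 0) := by
    have := (integrableOn_Ioi_comp_mul_left_iff
      (fun x : ℝ => Real.exp (-x) * x ^ (s - 1)) 0 hb).mpr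
    simpa [mul_zero] using this (by simpa using h0)
  have hb1 : b ^ (1 - s) * b ^ (s - 1) = 1 := by
    rw [← Real.rpow_add hb]; norm_num
  refine MeasureTheory.IntegrableOn.congr_fun (h1.const_mul (b ^ (1 - s)))
    (fun x hx => ?_) measurableSet_Ioi
  have hx0 : (0:ℝ) < x := hx
  have hmul : (b * x) ^ (s - 1) = b ^ (s - 1) * x ^ (s - 1) :=
    Real.mul_rpow hb.le hx0.le
  calc b ^ (1 - s) * (Real.exp (-(b * x)) * (b * x) ^ (s - 1))
      = b ^ (1 - s) * (Real.exp (-(b * x)) * (b ^ (s - 1) * x ^ (s - 1))) := by rw [hmul]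
    _ = (b ^ (1 - s) * b ^ (s - 1)) * (x ^ (s - 1) * Real.exp (-(b * x))) := by ring
    _ = x ^ (s - 1) * Real.exp (-(b * x)) := by rw [hb1, one_mul]

/-- if `‖T r‖ ≤ e^{-μ r}` for all `r ≥ 0` and
`U(t) = Γ(s)⁻¹ ∫₀^∞ e^{-t²/(4r)} r^{s-1} T r dr`, then
`‖U(t)‖ ≤ μ^{-s} e^{-t/4} + (2/μ)^s e^{-μt/2}` for all `t > 0`, and hence
there are `δ ∈ (0,μ)` and `M ≥ 0` with `‖U(t)‖ ≤ M e^{-δ t}` for all `t > 0`. -/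
theorem poisson_operator_decay
    {H : Type*} [NormedAddCommGroup H] [InnerProductSpace ℂ H] [CompleteSpace H]
    (μ : ℝ) (hμ : 0 < μ)
    (T : ℝ → H →L[ℂ] H)
    (hTc : ContinuousOn T (Ioi 0))
    (hTb : ∀ r : ℝ, 0 ≤ r → ‖T r‖ ≤ Real.exp (-(μ * r)))
    (s : ℝ) (hs : s ∈ Ioo (0:ℝ) 1) :
    (∀ t : ℝ, 0 < t →
      ‖(Real.Gamma s)⁻¹ •
          ∫ r in Ioi (0:ℝ), (Real.exp (-(t ^ 2) / (4 * r)) * r ^ (s - 1)) • T r‖ ≤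
        μ ^ (-s) * Real.exp (-(t / 4)) + (2 / μ) ^ s * Real.exp (-(μ * t / 2))) ∧
    (∃ δ : ℝ, δ ∈ Ioo 0 μ ∧ ∃ M : ℝ, 0 ≤ M ∧ ∀ t : ℝ, 0 < t →
      ‖(Real.Gamma s)⁻¹ •
          ∫ r in Ioi (0:ℝ), (Real.exp (-(t ^ 2) / (4 * r)) * r ^ (s - 1)) • T r‖ ≤
        M * Real.exp (-(δ * t))) := by
  have hΓ : 0 < Real.Gamma s := Real.Gamma_pos_of_pos hs.1
  have main : ∀ t : ℝ, 0 < t →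
      ‖(Real.Gamma s)⁻¹ •
          ∫ r in Ioi (0:ℝ), (Real.exp (-(t ^ 2) / (4 * r)) * r ^ (s - 1)) • T r‖ ≤
        μ ^ (-s) * Real.exp (-(t / 4)) + (2 / μ) ^ s * Real.exp (-(μ * t / 2)) := by
    intro t ht
    set g : ℝ → ℝ := fun r =>
      Real.exp (-(t / 4)) * (r ^ (s - 1) * Real.exp (-(μ * r))) +
      Real.exp (-(μ * t / 2)) * (r ^ (s - 1) * Real.exp (-(μ / 2 * r))) with hg_def
    have hg_int : IntegrableOn g (Ioi 0) :=
      ((aux_integrable_rpow_exp hμ hs.1).const_mul _).add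
        ((aux_integrable_rpow_exp (half_pos hμ) hs.1).const_mul _)
    have hbound : ∀ᵐ r ∂(volume.restrict (Ioi (0:ℝ))),
        ‖(Real.exp (-(t ^ 2) / (4 * r)) * r ^ (s - 1)) • T r‖ ≤ g r := by
      rw [ae_restrict_iff' measurableSet_Ioi]
      refine Eventually.of_forall (fun r hr => ?_)
      have hr0 : (0:ℝ) < r := hr
      have hnn : 0 ≤ Real.exp (-(t ^ 2) / (4 * r)) * r ^ (s - 1) := by positivity
      have h1 : ‖(Real.exp (-(t ^ 2) / (4 * r)) * r ^ (s - 1)) • T r‖ ≤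
          (Real.exp (-(t ^ 2) / (4 * r)) * r ^ (s - 1)) * Real.exp (-(μ * r)) := by
        rw [norm_smul, Real.norm_eq_abs, abs_of_nonneg hnn]
        exact mul_le_mul_of_nonneg_left (hTb r hr0.le) hnn
      rcases le_or_gt r t with hrt | hrt
      · have hexp : Real.exp (-(t ^ 2) / (4 * r)) ≤ Real.exp (-(t / 4)) := by
          apply Real.exp_le_exp.mpr
          rw [neg_div, neg_le_neg_iff, div_le_div_iff₀ (by norm_num) (by positivity)]
          nlinarith
        have hterm1 : ‖(Real.exp (-(t ^ 2) / (4 * r)) * r ^ (s - 1)) • T r‖ ≤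
            Real.exp (-(t / 4)) * (r ^ (s - 1) * Real.exp (-(μ * r))) := by
          refine h1.trans ?_
          have : (Real.exp (-(t ^ 2) / (4 * r)) * r ^ (s - 1)) * Real.exp (-(μ * r)) =
              Real.exp (-(t ^ 2) / (4 * r)) * (r ^ (s - 1) * Real.exp (-(μ * r))) := by ring
          rw [this]
          exact mul_le_mul_of_nonneg_right hexp (by positivity)
        have : 0 ≤ Real.exp (-(μ * t / 2)) * (r ^ (s - 1) * Real.exp (-(μ / 2 * r))) := by
          positivity
        simp only [hg_def]
        linarith
      · have hexp1 : Real.exp (-(t ^ 2) / (4 * r)) ≤ 1 := by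
          apply Real.exp_le_one_iff.mpr
          rw [neg_div]
          simp only [Left.neg_nonpos_iff]
          positivity
        have hexp2 : Real.exp (-(μ * r)) ≤
            Real.exp (-(μ * t / 2)) * Real.exp (-(μ / 2 * r)) := by
          rw [← Real.exp_add]
          apply Real.exp_le_exp.mpr
          nlinarith
        have hterm2 : ‖(Real.exp (-(t ^ 2) / (4 * r)) * r ^ (s - 1)) • T r‖ ≤
            Real.exp (-(μ * t / 2)) * (r ^ (s - 1) * Real.exp (-(μ / 2 * r))) := by
          refine h1.trans ?_
          calc (Real.exp (-(t ^ 2) / (4 * r)) * r ^ (s - 1)) * Real.exp (-(μ * r))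
              ≤ (1 * r ^ (s - 1)) * Real.exp (-(μ * r)) := by
                apply mul_le_mul_of_nonneg_right _ (Real.exp_nonneg _)
                exact mul_le_mul_of_nonneg_right hexp1 (by positivity)
            _ = r ^ (s - 1) * Real.exp (-(μ * r)) := by rw [one_mul]
            _ ≤ r ^ (s - 1) * (Real.exp (-(μ * t / 2)) * Real.exp (-(μ / 2 * r))) :=
                mul_le_mul_of_nonneg_left hexp2 (by positivity)
            _ = Real.exp (-(μ * t / 2)) * (r ^ (s - 1) * Real.exp (-(μ / 2 * r))) := by ring
        have : 0 ≤ Real.exp (-(t / 4)) * (r ^ (s - 1) * Real.exp (-(μ * r))) := by positivity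
        simp only [hg_def]
        linarith
    have hnorm : ‖∫ r in Ioi (0:ℝ), (Real.exp (-(t ^ 2) / (4 * r)) * r ^ (s - 1)) • T r‖ ≤
        ∫ r in Ioi (0:ℝ), g r := norm_integral_le_of_norm_le hg_int hbound
    have hgval : ∫ r in Ioi (0:ℝ), g r =
        Real.exp (-(t / 4)) * ((1 / μ) ^ s * Real.Gamma s) +
        Real.exp (-(μ * t / 2)) * ((1 / (μ / 2)) ^ s * Real.Gamma s) := by
      rw [hg_def, integral_add ((aux_integrable_rpow_exp hμ hs.1).const_mul _)
        ((aux_integrable_rpow_exp (half_pos hμ) hs.1).const_mul _),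
        integral_const_mul, integral_const_mul,
        Real.integral_rpow_mul_exp_neg_mul_Ioi hs.1 hμ,
        Real.integral_rpow_mul_exp_neg_mul_Ioi hs.1 (half_pos hμ)]
    have hμs : (1 / μ : ℝ) ^ s = μ ^ (-s) := by
      rw [one_div, Real.inv_rpow hμ.le, ← Real.rpow_neg hμ.le]
    have hμ2 : (1 / (μ / 2) : ℝ) ^ s = (2 / μ) ^ s := by
      rw [one_div_div]
    rw [norm_smul, Real.norm_eq_abs, abs_of_pos (inv_pos.mpr hΓ)]
    calc (Real.Gamma s)⁻¹ *
          ‖∫ r in Ioi (0:ℝ), (Real.exp (-(t ^ 2) / (4 * r)) * r ^ (s - 1)) • T r‖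
        ≤ (Real.Gamma s)⁻¹ * ∫ r in Ioi (0:ℝ), g r :=
          mul_le_mul_of_nonneg_left hnorm (inv_nonneg.mpr hΓ.le)
      _ = μ ^ (-s) * Real.exp (-(t / 4)) + (2 / μ) ^ s * Real.exp (-(μ * t / 2)) := by
          rw [hgval, hμs, hμ2]
          field_simp
  refine ⟨main, min (1/4) (μ/2), ⟨by positivity, lt_of_le_of_lt (min_le_right _ _) (by linarith)⟩,
    μ ^ (-s) + (2 / μ) ^ s, by positivity, fun t ht => ?_⟩
  refine (main t ht).trans ?_
  have h1 : Real.exp (-(t / 4)) ≤ Real.exp (-(min (1/4) (μ/2) * t)) := by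
    apply Real.exp_le_exp.mpr
    have := min_le_left (1/4 : ℝ) (μ/2)
    nlinarith
  have h2 : Real.exp (-(μ * t / 2)) ≤ Real.exp (-(min (1/4) (μ/2) * t)) := by
    apply Real.exp_le_exp.mpr
    have := min_le_right (1/4 : ℝ) (μ/2)
    nlinarith
  have hA : (0:ℝ) ≤ μ ^ (-s) := by positivity
  have hB : (0:ℝ) ≤ (2 / μ) ^ s := by positivity
  calc μ ^ (-s) * Real.exp (-(t / 4)) + (2 / μ) ^ s * Real.exp (-(μ * t / 2))
      ≤ μ ^ (-s) * Real.exp (-(min (1/4) (μ/2) * t)) +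
        (2 / μ) ^ s * Real.exp (-(min (1/4) (μ/2) * t)) := by
        gcongr
    _ = (μ ^ (-s) + (2 / μ) ^ s) * Real.exp (-(min (1/4) (μ/2) * t)) := by ring
end
end
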